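/- Let I be a stable monomial ideal of k[x_1,...,x_n] and let N be the maximal degree of a minimal monomial generator of I. Then every minimal monomial generator of the integral closure Ī has degree at most N. -/

import Mathlib

open MvPolynomial

variable {k : Type} [Field k] {n : ℕ}

/-- An ideal of `k[x₁,…,xₙ]` is a *monomial ideal* if it is generated by monomials. -/
def IsMonomialIdeal (I : Ideal (MvPolynomial (Fin n) k)) : Prop :=
  ∃ G : Set (Fin n →₀ ℕ), I = Ideal.span ((fun A => (monomial A (1 : k))) '' G)

/-- The integral closure of an ideal `I`, as a set: all elements `f` satisfying an
equation `f^r + a₁ f^{r-1} + ⋯ + a_r = 0` with `aᵢ ∈ Iⁱ`. -/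
def intCl (I : Ideal (MvPolynomial (Fin n) k)) : Set (MvPolynomial (Fin n) k) :=
  {f | ∃ r : ℕ, 0 < r ∧ ∃ a : ℕ → MvPolynomial (Fin n) k,
    (∀ i, 1 ≤ i → i ≤ r → a i ∈ I ^ i) ∧
    f ^ r + ∑ i ∈ Finset.Icc 1 r, a i * f ^ (r - i) = 0}

/-- The exponent vectors of the minimal monomial generators of a set `T` of polynomials:
those `A` with `x^A ∈ T` minimal in the componentwise (divisibility) order. -/
def minExps (T : Set (MvPolynomial (Fin n) k)) : Set (Fin n →₀ ℕ) :=
  {A | monomial A (1 : k) ∈ T ∧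
    ∀ B : Fin n →₀ ℕ, monomial B (1 : k) ∈ T → B ≤ A → B = A}

/-- A set `T` of polynomials is *stable* if for every monomial `x^A ∈ T`, letting `t` be the
largest index of a variable dividing `x^A`, we have `x_i · x^A / x_t ∈ T` for all `i < t`. -/
def IsStableSet (T : Set (MvPolynomial (Fin n) k)) : Prop :=
  ∀ A : Fin n →₀ ℕ, monomial A (1 : k) ∈ T →
    ∀ t : Fin n, A t ≠ 0 → (∀ s, A s ≠ 0 → s ≤ t) →
      ∀ i, i < t →
        monomial (A + Finsupp.single i 1 - Finsupp.single t 1) (1 : k) ∈ T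

/-- Lemma 1: exponents supporting elements of `I^i` dominate a sum of `i` monomial exponents of `I`. -/
lemma exists_of_mem_pow (I : Ideal (MvPolynomial (Fin n) k)) (hI : IsMonomialIdeal I) :
    ∀ (i : ℕ) (f : MvPolynomial (Fin n) k), f ∈ I ^ i → ∀ C ∈ f.support,
      ∃ a : Fin i → (Fin n →₀ ℕ), (∀ j, monomial (a j) (1:k) ∈ I) ∧ ∑ j, a j ≤ C := by
  obtain ⟨G, hG⟩ := hI
  intro i
  induction i with
  | zero =>
      intro f _ C _
      exact ⟨fun j => j.elim0, fun j => j.elim0, by simp⟩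
  | succ i ih =>
      intro f hf
      rw [pow_succ] at hf
      refine Submodule.mul_induction_on hf ?_ ?_
      · intro p hp q hq C hC
        have := MvPolynomial.support_mul p q hC
        rw [Finset.mem_add] at this
        obtain ⟨C₁, hC₁, C₂, hC₂, hCsum⟩ := this
        obtain ⟨a, ha, hale⟩ := ih p hp C₁ hC₁
        rw [hG] at hq
        obtain ⟨s, hsG, hsle⟩ := MvPolynomial.mem_ideal_span_monomial_image.mp hq C₂ hC₂
        refine ⟨Fin.snoc a s, ?_, ?_⟩
        · intro j
          refine Fin.lastCases ?_ ?_ j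
          · rw [Fin.snoc_last, hG]
            exact Ideal.subset_span ⟨s, hsG, rfl⟩
          · intro j'; rw [Fin.snoc_castSucc]; exact ha j'
        · rw [Fin.sum_univ_castSucc]
          simp only [Fin.snoc_castSucc, Fin.snoc_last]
          rw [← hCsum]
          exact add_le_add hale hsle
      · intro x y hx hy C hC
        have := MvPolynomial.support_add hC
        rw [Finset.mem_union] at this
        rcases this with h | h
        · exact hx C h
        · exact hy C h

/-- Lemma 2: conversely, a monomial whose exponent dominates a sum of `i` monomial exponents of `I`
lies in `I^i`. -/
lemma mem_pow_of (I : Ideal (MvPolynomial (Fin n) k)) :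
    ∀ (i : ℕ) (a : Fin i → (Fin n →₀ ℕ)), (∀ j, monomial (a j) (1:k) ∈ I) →
      ∀ C : Fin n →₀ ℕ, (∑ j, a j) ≤ C → monomial C (1:k) ∈ I ^ i := by
  have key : ∀ (i : ℕ) (a : Fin i → (Fin n →₀ ℕ)), (∀ j, monomial (a j) (1:k) ∈ I) →
      monomial (∑ j, a j) (1:k) ∈ I ^ i := by
    intro i
    induction i with
    | zero => intro a _; simp
    | succ i ih =>
        intro a ha
        rw [Fin.sum_univ_castSucc, ← one_mul (1:k), ← monomial_mul, pow_succ]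
        exact Ideal.mul_mem_mul (ih (fun j => a j.castSucc) (fun j => ha j.castSucc)) (ha (Fin.last i))
  intro i a ha C hle
  have : monomial C (1:k) = monomial (C - ∑ j, a j) (1:k) * monomial (∑ j, a j) (1:k) := by
    rw [monomial_mul, one_mul, tsub_add_cancel_of_le hle]
  rw [this]
  exact Ideal.mul_mem_left _ _ (key i a ha)

/-- Lemma 3: every monomial exponent of `T` dominates a minimal one. -/
lemma exists_minExps_le (T : Set (MvPolynomial (Fin n) k)) :
    ∀ A : Fin n →₀ ℕ, monomial A (1:k) ∈ T → ∃ A' ∈ minExps T, A' ≤ A := by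
  intro A
  induction A using WellFoundedLT.induction with
  | _ A ih =>
      intro hA
      by_cases h : ∀ B : Fin n →₀ ℕ, monomial B (1:k) ∈ T → B ≤ A → B = A
      · exact ⟨A, ⟨hA, h⟩, le_refl A⟩
      · push_neg at h
        obtain ⟨B, hB, hBA, hne⟩ := h
        obtain ⟨A', hA', hle⟩ := ih B (lt_of_le_of_ne hBA hne) hB
        exact ⟨A', hA', hle.trans hBA⟩

/-- Lemma 4: using stability, move mass away from the top variable `t`. -/
lemma move (I : Ideal (MvPolynomial (Fin n) k)) (hst : IsStableSet (I : Set (MvPolynomial (Fin n) k)))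
    (C : Fin n →₀ ℕ) (t : Fin n) (htmax : ∀ s, C s ≠ 0 → s ≤ t) (i : ℕ) (hiC : i ≤ C t) :
    ∀ (Dt : ℕ) (a : Fin i → (Fin n →₀ ℕ)), (∑ j, a j) t = Dt →
    (∀ j, monomial (a j) (1:k) ∈ I) → (∀ s, (∑ j, a j) s ≤ C s) →
    (∑ s, (∑ j, a j) s) + i ≤ ∑ s, C s →
    ∃ b : Fin i → (Fin n →₀ ℕ), (∀ j, monomial (b j) (1:k) ∈ I) ∧
      (∀ s, (∑ j, b j) s ≤ C s) ∧ (∑ j, b j) t + i ≤ C t := by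
  intro Dt
  induction Dt using Nat.strong_induction_on with
  | _ Dt ih =>
  intro a hDt ha hle hdeg
  by_cases hdone : (∑ j, a j) t + i ≤ C t
  · exact ⟨a, ha, hle, hdone⟩
  -- Dt ≥ 1
  have hDt1 : 1 ≤ Dt := by omega
  -- find j with (a j) t ≠ 0
  have hsumt : ∑ j, (a j) t = Dt := by rw [← Finset.sum_apply' t]; exact hDt
  have hj : ∃ j ∈ Finset.univ, (a j) t ≠ 0 := by
    apply Finset.exists_ne_zero_of_sum_ne_zero
    rw [hsumt]; omega
  obtain ⟨j, -, hjt⟩ := hj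
  -- find l ≠ t with slack
  have hl : ∃ l, (∑ j', a j') l < C l ∧ l ≠ t := by
    by_contra h
    push_neg at h
    have heq : ∀ l, l ≠ t → (∑ j', a j') l = C l := by
      intro l hlt
      rcases lt_or_eq_of_le (hle l) with h' | h'
      · exact absurd (h l h') hlt
      · exact h'
    have h1 : ∑ s ∈ Finset.univ.erase t, C s = ∑ s ∈ Finset.univ.erase t, (∑ j', a j') s := by
      apply Finset.sum_congr rfl
      intro s hs
      exact (heq s (Finset.ne_of_mem_erase hs)).symm
    have h2 : ∑ s ∈ Finset.univ.erase t, C s + C t = ∑ s, C s :=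
      Finset.sum_erase_add _ _ (Finset.mem_univ t)
    have h3 : ∑ s ∈ Finset.univ.erase t, (∑ j', a j') s + Dt = ∑ s, (∑ j', a j') s := by
      rw [← hDt]; exact Finset.sum_erase_add _ _ (Finset.mem_univ t)
    omega
  obtain ⟨l, hlslack, hlne⟩ := hl
  have hlt : l < t := by
    have : C l ≠ 0 := by omega
    exact lt_of_le_of_ne (htmax l this) hlne
  -- each coordinate of a j is bounded by the sum
  have hcoord : ∀ j' s, (a j') s ≤ (∑ j'', a j'') s := by
    intro j' s
    rw [Finset.sum_apply' s]
    exact Finset.single_le_sum (f := fun j'' => (a j'') s) (fun _ _ => Nat.zero_le _)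
      (Finset.mem_univ j')
  -- stability move
  have hnew : monomial (a j + Finsupp.single l 1 - Finsupp.single t 1) (1:k) ∈ I := by
    apply hst (a j) (ha j) t hjt ?_ l hlt
    intro s hs
    have h1 : (a j) s ≤ C s := le_trans (hcoord j s) (hle s)
    exact htmax s (by omega)
  set newv : Fin n →₀ ℕ := a j + Finsupp.single l 1 - Finsupp.single t 1 with hnewv
  set b : Fin i → (Fin n →₀ ℕ) := Function.update a j newv with hb
  have hbj : ∀ j', monomial (b j') (1:k) ∈ I := by
    intro j'
    rw [hb, Function.update_apply]
    split
    · exact hnew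
    · exact ha j'
  -- coordinate identity: newv s + single t 1 s = a j s + single l 1 s
  have hnewc : ∀ s, newv s + (Finsupp.single t (1:ℕ)) s = (a j) s + (Finsupp.single l (1:ℕ)) s := by
    intro s
    rw [hnewv, Finsupp.tsub_apply, Finsupp.add_apply]
    have h1 : (Finsupp.single t (1:ℕ)) s = if t = s then 1 else 0 := Finsupp.single_apply
    have h2 : (Finsupp.single l (1:ℕ)) s = if l = s then 1 else 0 := Finsupp.single_apply
    rcases eq_or_ne s t with rfl | hst'
    · have : (Finsupp.single l (1:ℕ)) s = 0 := by rw [h2, if_neg (by exact fun h => hlne h)]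
      rw [this, h1, if_pos rfl]
      have := hjt
      omega
    · rw [h1, if_neg (fun h => hst' h.symm)]
      omega
  -- sum over update
  have hbsum : ∀ s, (∑ j', b j') s + (Finsupp.single t (1:ℕ)) s
      = (∑ j', a j') s + (Finsupp.single l (1:ℕ)) s := by
    intro s
    rw [Finset.sum_apply' s, Finset.sum_apply' s]
    have hbu : ∑ j', (b j') s = newv s + ∑ j' ∈ Finset.univ.erase j, (a j') s := by
      rw [← Finset.add_sum_erase _ (fun j' => (b j') s) (Finset.mem_univ j)]
      congr 1
      · rw [hb, Function.update_self]
      · apply Finset.sum_congr rfl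
        intro x hx
        rw [hb, Function.update_of_ne (Finset.ne_of_mem_erase hx)]
    have hau : ∑ j', (a j') s = (a j) s + ∑ j' ∈ Finset.univ.erase j, (a j') s := by
      rw [← Finset.add_sum_erase _ _ (Finset.mem_univ j)]
    have := hnewc s
    omega
  have hsingle_t : ∀ s, (Finsupp.single t (1:ℕ)) s = if t = s then 1 else 0 :=
    fun s => Finsupp.single_apply
  have hsingle_l : ∀ s, (Finsupp.single l (1:ℕ)) s = if l = s then 1 else 0 :=
    fun s => Finsupp.single_apply
  -- new Dt
  have hbt : (∑ j', b j') t = Dt - 1 := by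
    have h := hbsum t
    rw [hsingle_t t, if_pos rfl, hsingle_l t, if_neg hlne] at h
    omega
  -- apply induction
  apply ih (Dt - 1) (by omega) b hbt hbj
  · intro s
    have h := hbsum s
    rw [hsingle_t s, hsingle_l s] at h
    by_cases h1 : t = s
    · rw [if_pos h1, if_neg (fun hh => hlne (hh.trans h1.symm))] at h
      have := hle s
      omega
    · rw [if_neg h1] at h
      by_cases h2 : l = s
      · subst h2
        rw [if_pos rfl] at h
        omega
      · rw [if_neg h2] at h
        have := hle s
        omega
  · have h1 : ∑ s, ((∑ j', b j') s + (Finsupp.single t (1:ℕ)) s)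
        = ∑ s, ((∑ j', a j') s + (Finsupp.single l (1:ℕ)) s) :=
      Finset.sum_congr rfl (fun s _ => hbsum s)
    rw [Finset.sum_add_distrib, Finset.sum_add_distrib] at h1
    have h2 : ∑ s, (Finsupp.single t (1:ℕ)) s = 1 := by
      simp [hsingle_t, Finset.sum_ite_eq]
    have h3 : ∑ s, (Finsupp.single l (1:ℕ)) s = 1 := by
      simp [hsingle_l, Finset.sum_ite_eq]
    omega

/-- If `I` is a stable monomial ideal all of whose minimal monomial
generators have degree at most `N` (e.g. `N` is the maximal degree of a minimal generator),
then every minimal monomial generator of the integral closure `Ī` has degree at most `N`. -/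
theorem intCl_minExps_degree_le (I : Ideal (MvPolynomial (Fin n) k))
    (hI : IsMonomialIdeal I) (hst : IsStableSet (I : Set (MvPolynomial (Fin n) k)))
    (N : ℕ) (hN : ∀ A ∈ minExps (I : Set (MvPolynomial (Fin n) k)), ∑ j, A j ≤ N) :
    ∀ B ∈ minExps (intCl I), ∑ j, B j ≤ N := by
  intro B hB
  obtain ⟨hBmem, hBmin⟩ := hB
  by_contra hgt
  push_neg at hgt
  -- B ≠ 0, top variable t
  have hBne : B ≠ 0 := by
    intro h
    rw [h] at hgt
    simp at hgt
  have hsupp : B.support.Nonempty := Finsupp.support_nonempty_iff.mpr hBne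
  set t := B.support.max' hsupp with ht
  have htmem : B t ≠ 0 := Finsupp.mem_support_iff.mp (B.support.max'_mem hsupp)
  have htmax : ∀ s, B s ≠ 0 → s ≤ t := fun s hs =>
    Finset.le_max' _ s (Finsupp.mem_support_iff.mpr hs)
  obtain ⟨r, hr, a, ha, heq⟩ := hBmem
  -- find j with j • B in the support of a j
  have hcoeff : coeff (r • B) ((monomial B (1:k)) ^ r) = 1 := by
    rw [monomial_pow, one_pow, coeff_monomial, if_pos rfl]
  have hS : coeff (r • B) (∑ i ∈ Finset.Icc 1 r, a i * (monomial B (1:k)) ^ (r - i)) = -1 := by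
    have h1 : (∑ i ∈ Finset.Icc 1 r, a i * (monomial B (1:k)) ^ (r - i))
        = -((monomial B (1:k)) ^ r) := eq_neg_of_add_eq_zero_right heq
    rw [h1, coeff_neg, hcoeff]
  rw [coeff_sum] at hS
  have hSne : ∑ i ∈ Finset.Icc 1 r, coeff (r • B) (a i * (monomial B (1:k)) ^ (r - i)) ≠ 0 := by
    rw [hS]; exact neg_ne_zero.mpr one_ne_zero
  obtain ⟨j, hjmem, hjne⟩ := Finset.exists_ne_zero_of_sum_ne_zero hSne
  rw [Finset.mem_Icc] at hjmem
  have hrB : r • B = j • B + (r - j) • B := by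
    rw [← add_smul]
    congr 1
    omega
  have hcm : coeff (r • B) (a j * (monomial B (1:k)) ^ (r - j)) = coeff (j • B) (a j) := by
    rw [monomial_pow, one_pow, hrB, coeff_mul_monomial, mul_one]
  have hjsupp : j • B ∈ (a j).support := by
    rw [MvPolynomial.mem_support_iff, ← hcm]
    exact hjne
  obtain ⟨c, hc, hcle⟩ := exists_of_mem_pow I hI j (a j) (ha j hjmem.1 hjmem.2) (j • B) hjsupp
  -- replace each c m by a minimal generator
  have hmin : ∀ m : Fin j, ∃ c', c' ∈ minExps (I : Set (MvPolynomial (Fin n) k)) ∧ c' ≤ c m :=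
    fun m => by
      obtain ⟨c', h1, h2⟩ := exists_minExps_le (I : Set (MvPolynomial (Fin n) k)) (c m) (hc m)
      exact ⟨c', h1, h2⟩
  choose c' hc'min hc'le using hmin
  have hc'I : ∀ m, monomial (c' m) (1:k) ∈ I := fun m => (hc'min m).1
  have hc'N : ∀ m, ∑ s, (c' m) s ≤ N := fun m => hN _ (hc'min m)
  have hc'sum : ∀ s, (∑ m, c' m) s ≤ (j • B) s := by
    intro s
    have h1 : (∑ m, c' m) ≤ (∑ m, c m) := Finset.sum_le_sum (fun m _ => hc'le m)
    exact Finsupp.le_def.mp (h1.trans hcle) s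
  have hCs : ∀ s, (j • B) s = j * B s := fun s => by rw [Finsupp.smul_apply, smul_eq_mul]
  have hj1 : 1 ≤ j := hjmem.1
  have htmaxC : ∀ s, (j • B) s ≠ 0 → s ≤ t := by
    intro s hs
    apply htmax s
    intro h0
    rw [hCs s, h0, mul_zero] at hs
    exact hs rfl
  have hiC : j ≤ (j • B) t := by
    rw [hCs t]
    calc j = j * 1 := (mul_one j).symm
    _ ≤ j * B t := Nat.mul_le_mul_left j (by omega)
  have hdeg : (∑ s, (∑ m, c' m) s) + j ≤ ∑ s, (j • B) s := by
    have h1 : ∑ s, (∑ m, c' m) s = ∑ m, ∑ s, (c' m) s := by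
      rw [Finset.sum_congr rfl (fun s _ => Finset.sum_apply' s)]
      exact Finset.sum_comm
    have h2 : ∑ m, ∑ s, (c' m) s ≤ j * N := by
      calc ∑ m, ∑ s, (c' m) s ≤ ∑ _m : Fin j, N := Finset.sum_le_sum (fun m _ => hc'N m)
      _ = j * N := by simp [Finset.sum_const, Finset.card_univ]
    have h3 : ∑ s, (j • B) s = j * ∑ s, B s := by
      rw [Finset.sum_congr rfl (fun s _ => hCs s), ← Finset.mul_sum]
    have h4 : j * N + j ≤ j * ∑ s, B s := by
      calc j * N + j = j * (N + 1) := by ring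
      _ ≤ j * ∑ s, B s := Nat.mul_le_mul_left j (by omega)
    calc (∑ s, (∑ m, c' m) s) + j = (∑ m, ∑ s, (c' m) s) + j := by rw [h1]
    _ ≤ j * N + j := Nat.add_le_add_right h2 j
    _ ≤ j * ∑ s, B s := h4
    _ = ∑ s, (j • B) s := h3.symm
  obtain ⟨b, hbI, hble, hbt⟩ := move I hst (j • B) t htmaxC j hiC ((∑ m, c' m) t) c' rfl hc'I
    hc'sum hdeg
  -- the new monomial B - e_t
  set B' := B - Finsupp.single t 1 with hB'
  have hB's : ∀ s, B' s = B s - (if t = s then 1 else 0) := by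
    intro s
    rw [hB', Finsupp.tsub_apply, Finsupp.single_apply]
  have hmem' : monomial (j • B') (1:k) ∈ I ^ j := by
    apply mem_pow_of I j b hbI
    rw [Finsupp.le_def]
    intro s
    rw [Finsupp.smul_apply, smul_eq_mul, hB's s]
    by_cases h1 : t = s
    · rw [if_pos h1, ← h1]
      have h2 : j * (B t - 1) + j = j * B t := by
        rw [← Nat.mul_succ]
        congr 1
        omega
      have hbt' := hbt
      rw [hCs t] at hbt'
      omega
    · rw [if_neg h1, Nat.sub_zero, ← hCs s]
      exact hble s
  have hclmem : monomial B' (1:k) ∈ intCl I := by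
    refine ⟨j, hj1, fun i => if i = j then -(monomial (j • B') (1:k)) else 0, ?_, ?_⟩
    · intro i h1 h2
      show (if i = j then -(monomial (j • B') (1:k)) else 0) ∈ I ^ i
      by_cases hij : i = j
      · rw [if_pos hij]
        subst hij
        exact neg_mem hmem'
      · rw [if_neg hij]
        exact zero_mem _
    · have hsum1 : ∑ i ∈ Finset.Icc 1 j,
          (if i = j then -(monomial (j • B') (1:k)) else 0) * (monomial B' (1:k)) ^ (j - i)
          = -(monomial (j • B') (1:k)) := by
        rw [Finset.sum_eq_single_of_mem j (Finset.mem_Icc.mpr ⟨hj1, le_refl j⟩)]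
        · rw [if_pos (Eq.refl j), Nat.sub_self, pow_zero, mul_one]
        · intro x _ hxne
          rw [if_neg hxne, zero_mul]
      rw [hsum1, monomial_pow, one_pow]
      exact add_neg_cancel _
  -- contradiction with minimality of B
  have hBeq : B' = B := hBmin B' hclmem tsub_le_self
  have h1 : B' t = B t - 1 := by rw [hB's t, if_pos rfl]
  rw [hBeq] at h1
  omega
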